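/- arXiv:1808.08134 — 2 statements merged into one kernel-verified Lean document; each statement's English description precedes it below -/
import Mathlib

section
/- Let d ≥ 1, 1 < p < p_*, v ∈ ℝ^d with |v| < 1, and ω ≥ 0. Let Q ∈ H^{1/2}(ℝ^d) ∩ L^{p+1}(ℝ^d) be a weak solution of √(−Δ)Q + i v·∇Q + ωQ − |Q|^{p−1}Q = 0, and set u(t) = e^{iωt} Q(· − vt) ∈ H^{1/2}(ℝ^d) for t ∈ ℝ. If there exists φ ∈ H^{1/2}(ℝ^d) with lim_{t→+∞} ‖u(t) − e^{−it√(−Δ)}φ‖_{H^{1/2}} = 0, then φ = 0 and Q = 0 almost everywhere. The analogous statement holds for t → −∞. -/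
noncomputable section

open MeasureTheory Filter Complex
open scoped RealInnerProductSpace ENNReal

abbrev Ed (d : ℕ) := EuclideanSpace ℝ (Fin d)

/-- Fourier integral with the normalization `(2π)^{-d/2} ∫ e^{-i x·ξ} f(x) dx`. -/
def FT {d : ℕ} (f : Ed d → ℂ) (ξ : Ed d) : ℂ :=
  (((2 * Real.pi) ^ (-(d : ℝ) / 2) : ℝ) : ℂ) *
    ∫ x : Ed d, Complex.exp (-Complex.I * (⟪x, ξ⟫ : ℂ)) * f x

/-- `fhat` is the Fourier–Plancherel transform of `f ∈ L²(ℝ^d)`, characterized by duality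
against Schwartz functions. -/
structure IsFT {d : ℕ} (f fhat : Ed d → ℂ) : Prop where
  memL2 : MemLp f 2 (volume : Measure (Ed d))
  memL2_hat : MemLp fhat 2 (volume : Measure (Ed d))
  duality : ∀ g : SchwartzMap (Ed d) ℂ,
    ∫ ξ : Ed d, fhat ξ * g ξ = ∫ x : Ed d, f x * FT (fun y => g y) x

/-- `f ∈ H^{1/2}(ℝ^d)` with (Plancherel) Fourier transform `fhat`. -/
def H12 {d : ℕ} (f fhat : Ed d → ℂ) : Prop :=
  IsFT f fhat ∧ Integrable (fun ξ : Ed d => (1 + ‖ξ‖) * ‖fhat ξ‖ ^ 2) volume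

/-- `Q ∈ H^{1/2} ∩ L^{p+1}` is a weak solution of `√(-Δ) Q + i v·∇Q + ω Q - |Q|^{p-1} Q = 0`. -/
def IsWeakSolHW {d : ℕ} (p : ℝ) (v : Ed d) (ω : ℝ) (Q Qhat : Ed d → ℂ) : Prop :=
  H12 Q Qhat ∧ MemLp Q (ENNReal.ofReal (p + 1)) volume ∧
  ∀ φ φhat : Ed d → ℂ, H12 φ φhat → MemLp φ (ENNReal.ofReal (p + 1)) volume →
    ∫ ξ : Ed d, ((‖ξ‖ - ⟪v, ξ⟫ + ω : ℝ) : ℂ) * starRingEnd ℂ (φhat ξ) * Qhat ξ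
      = ∫ x : Ed d, starRingEnd ℂ (φ x) * ((‖Q x‖ ^ (p - 1) : ℝ) : ℂ) * Q x

/-- The squared `H^{1/2}`-distance at time `t` between the traveling solitary wave
`e^{iωt}Q(· - vt)` and the free half-wave `e^{-it√(-Δ)}φ`, computed in Fourier variables:
the Fourier transform of `e^{iωt}Q(· - vt)` is `e^{i(ωt - t v·ξ)}Q̂(ξ)` and that of
`e^{-it√(-Δ)}φ` is `e^{-it|ξ|}φ̂(ξ)`. -/
def scatDistSq {d : ℕ} (v : Ed d) (ω : ℝ) (Qhat φhat : Ed d → ℂ) (t : ℝ) : ℝ :=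
  ∫ ξ : Ed d, (1 + ‖ξ‖) *
    ‖Complex.exp (Complex.I * ((ω * t - t * ⟪v, ξ⟫ : ℝ) : ℂ)) * Qhat ξ
      - Complex.exp (-Complex.I * ((t * ‖ξ‖ : ℝ) : ℂ)) * φhat ξ‖ ^ 2

open scoped FourierTransform


private lemma normsq_eq (z : ℂ) : (‖z‖:ℝ)^2 = (z * (starRingEnd ℂ) z).re := by
  rw [Complex.mul_conj]
  simp [Complex.sq_norm]

private lemma cross_identity (w θ₁ θ₂ : ℝ) (q f : ℂ) :
    w * ‖Complex.exp (Complex.I * (θ₁:ℂ)) * q - Complex.exp (-Complex.I * (θ₂:ℂ)) * f‖ ^ 2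
      = w * (‖q‖^2 + ‖f‖^2)
        - 2 * (((w:ℂ) * (q * (starRingEnd ℂ) f)) * Complex.exp (Complex.I * ((θ₁ + θ₂ : ℝ):ℂ))).re := by
  set a := Complex.exp (Complex.I * (θ₁:ℂ)) with ha_def
  set b := Complex.exp (-Complex.I * (θ₂:ℂ)) with hb_def
  have hca : (starRingEnd ℂ) a = Complex.exp (-(Complex.I * (θ₁:ℂ))) := by
    rw [ha_def, ← Complex.exp_conj]; congr 1; simp
  have hcb : (starRingEnd ℂ) b = Complex.exp (Complex.I * (θ₂:ℂ)) := by
    rw [hb_def, ← Complex.exp_conj]; congr 1; simp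
  have ha : a * (starRingEnd ℂ) a = 1 := by
    rw [hca, ← Complex.exp_add]; simp
  have hb : b * (starRingEnd ℂ) b = 1 := by
    rw [hcb, hb_def, ← Complex.exp_add]; simp
  have hab : a * (starRingEnd ℂ) b = Complex.exp (Complex.I * ((θ₁ + θ₂ : ℝ):ℂ)) := by
    rw [hcb, ha_def, ← Complex.exp_add]; congr 1; push_cast; ring
  have hba : b * (starRingEnd ℂ) a =
      (starRingEnd ℂ) (Complex.exp (Complex.I * ((θ₁ + θ₂ : ℝ):ℂ))) := by
    rw [hca, hb_def, ← Complex.exp_add, ← Complex.exp_conj]; congr 1; push_cast; simp; ring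
  set e := Complex.exp (Complex.I * ((θ₁ + θ₂ : ℝ):ℂ)) with he_def
  have key : (a*q - b*f) * (starRingEnd ℂ) (a*q - b*f)
      = q * (starRingEnd ℂ) q + f * (starRingEnd ℂ) f
        - (e * (q * (starRingEnd ℂ) f) + (starRingEnd ℂ) (e * (q * (starRingEnd ℂ) f))) := by
    simp only [map_sub, map_mul, RingHomCompTriple.comp_apply, Complex.conj_conj,
      RingHom.id_apply]
    linear_combination (q * (starRingEnd ℂ) q) * ha + (f * (starRingEnd ℂ) f) * hb
      - (q * (starRingEnd ℂ) f) * hab - ((starRingEnd ℂ) q * f) * hba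
  have hre : ‖a*q - b*f‖^2 = ‖q‖^2 + ‖f‖^2 - 2 * ((q * (starRingEnd ℂ) f) * e).re := by
    rw [normsq_eq, key]
    simp only [Complex.sub_re, Complex.add_re, Complex.conj_re, ← normsq_eq]
    have : (e * (q * (starRingEnd ℂ) f)).re = ((q * (starRingEnd ℂ) f) * e).re := by
      rw [mul_comm]
    rw [this]; ring
  rw [hre]
  have : (((w:ℂ) * (q * (starRingEnd ℂ) f)) * e).re = w * ((q * (starRingEnd ℂ) f) * e).re := by
    rw [mul_assoc, Complex.re_ofReal_mul]
  rw [this]; ring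


set_option maxHeartbeats 1000000 in



private lemma cesaro {c : ℝ → ℝ} (hc : Continuous c) {L : ℝ}
    (h : Tendsto c atTop (nhds L)) :
    Tendsto (fun T => T⁻¹ * ∫ t in Set.Ioc (0:ℝ) T, c t) atTop (nhds L) := by
  rw [Metric.tendsto_atTop] at h ⊢
  intro ε hε
  obtain ⟨M₀, hM₀⟩ := h (ε/4) (by linarith)
  set M := max M₀ 0 with hM_def
  have hM0 : 0 ≤ M := le_max_right _ _
  set B := |∫ t in Set.Ioc (0:ℝ) M, (c t - L)| with hB_def
  have hB0 : 0 ≤ B := abs_nonneg _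
  refine ⟨max (max M 1) (4 * (B + 1) / ε), fun T hT => ?_⟩
  have hTM : M ≤ T := le_trans (le_trans (le_max_left _ _) (le_max_left _ _)) hT
  have hT1 : 1 ≤ T := le_trans (le_trans (le_max_right _ _) (le_max_left _ _)) hT
  have hT0 : 0 < T := lt_of_lt_of_le one_pos hT1
  have hTB : 4 * (B + 1) / ε ≤ T := le_trans (le_max_right _ _) hT
  -- integrability
  have hint1 : IntegrableOn (fun t => c t - L) (Set.Ioc (0:ℝ) M) volume :=
    (hc.sub continuous_const).integrableOn_Ioc
  have hint2 : IntegrableOn (fun t => c t - L) (Set.Ioc M T) volume :=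
    (hc.sub continuous_const).integrableOn_Ioc
  have hsplit : ∫ t in Set.Ioc (0:ℝ) T, (c t - L)
      = (∫ t in Set.Ioc (0:ℝ) M, (c t - L)) + ∫ t in Set.Ioc M T, (c t - L) := by
    rw [← setIntegral_union (Set.Ioc_disjoint_Ioc_of_le le_rfl) measurableSet_Ioc hint1 hint2,
      Set.Ioc_union_Ioc_eq_Ioc hM0 hTM]
  have htail : ‖∫ t in Set.Ioc M T, (c t - L)‖ ≤ (ε/4) * T := by
    have := norm_setIntegral_le_of_norm_le_const (μ := volume) (s := Set.Ioc M T)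
      (f := fun t => c t - L) (C := ε/4)
      (by rw [Real.volume_Ioc]; exact ENNReal.ofReal_lt_top)
      (fun x hx => by
        have : M₀ ≤ x := le_trans (le_trans (le_max_left _ _) (le_of_lt hx.1)) (le_refl x)
        have hd := hM₀ x this
        rw [Real.dist_eq] at hd
        simpa [Real.norm_eq_abs] using le_of_lt hd)
    refine this.trans ?_
    rw [Real.volume_real_Ioc_of_le hTM]
    have : T - M ≤ T := by linarith
    nlinarith
  -- the average of c minus L
  have hintc : IntegrableOn c (Set.Ioc (0:ℝ) T) volume := hc.integrableOn_Ioc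
  have havg : T⁻¹ * (∫ t in Set.Ioc (0:ℝ) T, c t) - L
      = T⁻¹ * ∫ t in Set.Ioc (0:ℝ) T, (c t - L) := by
    rw [integral_sub hintc (integrableOn_const (by rw [Real.volume_Ioc]; exact ENNReal.ofReal_ne_top))]
    rw [setIntegral_const, Real.volume_real_Ioc_of_le hT0.le, sub_zero,
      smul_eq_mul]
    field_simp
  rw [Real.dist_eq]
  have : |T⁻¹ * (∫ t in Set.Ioc (0:ℝ) T, c t) - L| ≤ T⁻¹ * (B + (ε/4) * T) := by
    rw [havg, hsplit, abs_mul, abs_of_pos (inv_pos.2 hT0)]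
    have habs : |(∫ t in Set.Ioc (0:ℝ) M, (c t - L)) + ∫ t in Set.Ioc M T, (c t - L)|
        ≤ B + (ε/4) * T := by
      refine (abs_add_le _ _).trans ?_
      gcongr
      simpa [Real.norm_eq_abs] using htail
    gcongr
  refine lt_of_le_of_lt this ?_
  have h1 : T⁻¹ * B < ε / 2 := by
    rw [inv_mul_lt_iff₀ hT0]
    have : 4 * (B+1) / ε ≤ T := hTB
    rw [div_le_iff₀ hε] at this
    nlinarith
  have h2 : T⁻¹ * ((ε/4) * T) = ε / 4 := by field_simp
  calc T⁻¹ * (B + ε/4*T) = T⁻¹ * B + T⁻¹ * (ε/4*T) := by ring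
    _ < ε/2 + ε/4 := by rw [h2]; linarith
    _ < ε := by linarith

private lemma norm_exp_I_mul_ofReal (s : ℝ) : ‖Complex.exp (Complex.I * (s:ℂ))‖ = 1 := by
  rw [Complex.norm_exp]
  simp [Complex.mul_re]

set_option maxHeartbeats 1000000 in
private lemma core {d : ℕ} (g : Ed d → ℂ) (hg : Integrable g (volume : Measure (Ed d)))
    (Λ : Ed d → ℝ) (hΛc : Continuous Λ) (hΛ : ∀ᵐ ξ : Ed d ∂(volume : Measure (Ed d)), 0 < Λ ξ)
    (A : ℝ)
    (h : Tendsto (fun t : ℝ => A - 2 *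
        (∫ ξ : Ed d, g ξ * Complex.exp (Complex.I * ((t * Λ ξ : ℝ) : ℂ))).re)
      atTop (nhds 0)) : A = 0 := by
  have hexp_cont : Continuous fun p : ℝ × Ed d =>
      Complex.exp (Complex.I * ((p.1 * Λ p.2 : ℝ) : ℂ)) := by
    exact Complex.continuous_exp.comp (continuous_const.mul
      (Complex.continuous_ofReal.comp (continuous_fst.mul (hΛc.comp continuous_snd))))
  have hslice : ∀ t : ℝ, Integrable
      (fun ξ : Ed d => g ξ * Complex.exp (Complex.I * ((t * Λ ξ : ℝ) : ℂ))) volume := by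
    intro t
    have hc : Continuous fun ξ : Ed d => Complex.exp (Complex.I * ((t * Λ ξ : ℝ) : ℂ)) :=
      Complex.continuous_exp.comp (continuous_const.mul
        (Complex.continuous_ofReal.comp (continuous_const.mul hΛc)))
    refine hg.norm.mono' (hg.aestronglyMeasurable.mul hc.aestronglyMeasurable) ?_
    refine Filter.Eventually.of_forall fun ξ => ?_
    exact le_of_eq (by rw [norm_mul, _root_.norm_exp_I_mul_ofReal, mul_one])
  set C : ℝ → ℂ := fun t => ∫ ξ : Ed d, g ξ * Complex.exp (Complex.I * ((t * Λ ξ : ℝ) : ℂ))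
    with hC_def
  have hC_cont : Continuous C := by
    refine continuous_of_dominated (bound := fun ξ => ‖g ξ‖)
      (fun t => (hslice t).aestronglyMeasurable) ?_ hg.norm ?_
    · intro t
      refine Filter.Eventually.of_forall fun ξ => ?_
      rw [norm_mul, _root_.norm_exp_I_mul_ofReal, mul_one]
    · refine Filter.Eventually.of_forall fun ξ => ?_
      exact continuous_const.mul (Complex.continuous_exp.comp (continuous_const.mul
        (Complex.continuous_ofReal.comp (continuous_id.mul continuous_const))))
  have hcre : Tendsto (fun t => (C t).re) atTop (nhds (A/2)) := by
    have h2 : Tendsto (fun t : ℝ => (A - (A - 2 * (C t).re))/2) atTop (nhds ((A - 0)/2)) :=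
      ((tendsto_const_nhds.sub h).div_const 2)
    rw [sub_zero] at h2
    refine h2.congr fun t => by ring
  have cesA : Tendsto (fun T : ℝ => T⁻¹ * ∫ t in Set.Ioc (0:ℝ) T, (C t).re)
      atTop (nhds (A/2)) := cesaro (Complex.continuous_re.comp hC_cont) hcre
  -- kernel
  set K : ℝ → Ed d → ℂ := fun T ξ =>
    ∫ t in Set.Ioc (0:ℝ) T, Complex.exp (Complex.I * ((t * Λ ξ : ℝ) : ℂ)) with hK_def
  set J : ℝ → Ed d → ℂ := fun T ξ =>
    ((T:ℂ))⁻¹ * ((Complex.exp (Complex.I * ((Λ ξ : ℝ):ℂ) * (T:ℂ)) - 1) /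
      (Complex.I * ((Λ ξ : ℝ):ℂ))) with hJ_def
  have hKJ : ∀ T : ℝ, 0 < T → ∀ ξ : Ed d, Λ ξ ≠ 0 →
      K T ξ = (Complex.exp (Complex.I * ((Λ ξ : ℝ):ℂ) * (T:ℂ)) - 1) /
        (Complex.I * ((Λ ξ : ℝ):ℂ)) := by
    intro T hT ξ hξ
    have harg : ∀ t : ℝ, Complex.I * ((t * Λ ξ : ℝ) : ℂ) = (Complex.I * ((Λ ξ : ℝ):ℂ)) * (t:ℂ) := by
      intro t; push_cast; ring
    have hne : Complex.I * ((Λ ξ : ℝ):ℂ) ≠ 0 := by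
      simp [Complex.I_ne_zero, hξ]
    rw [hK_def]
    simp only [harg]
    rw [← intervalIntegral.integral_of_le (le_of_lt hT),
      integral_exp_mul_complex hne]
    simp
  have hKbound : ∀ T : ℝ, 0 < T → ∀ ξ : Ed d, ‖K T ξ‖ ≤ T := by
    intro T hT ξ
    have := norm_setIntegral_le_of_norm_le_const (μ := volume) (s := Set.Ioc (0:ℝ) T)
      (f := fun t => Complex.exp (Complex.I * ((t * Λ ξ : ℝ) : ℂ))) (C := 1)
      (by rw [Real.volume_Ioc]; exact ENNReal.ofReal_lt_top)
      (fun x _ => le_of_eq (_root_.norm_exp_I_mul_ofReal _))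
    rw [Real.volume_real_Ioc_of_le hT.le, sub_zero, one_mul] at this
    exact this
  -- Fubini step
  have hstep : ∀ T : ℝ, 0 < T →
      T⁻¹ * (∫ t in Set.Ioc (0:ℝ) T, (C t).re) = (∫ ξ : Ed d, g ξ * J T ξ).re := by
    intro T hT
    have hmeas : AEStronglyMeasurable
        (Function.uncurry fun (t : ℝ) (ξ : Ed d) =>
          g ξ * Complex.exp (Complex.I * ((t * Λ ξ : ℝ) : ℂ)))
        ((volume.restrict (Set.Ioc (0:ℝ) T)).prod volume) := by
      exact (hg.aestronglyMeasurable.comp_snd).mul hexp_cont.aestronglyMeasurable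
    have hprod : Integrable
        (Function.uncurry fun (t : ℝ) (ξ : Ed d) =>
          g ξ * Complex.exp (Complex.I * ((t * Λ ξ : ℝ) : ℂ)))
        ((volume.restrict (Set.Ioc (0:ℝ) T)).prod volume) := by
      rw [integrable_prod_iff hmeas]
      constructor
      · exact Filter.Eventually.of_forall fun t => hslice t
      · have heq : (fun t : ℝ => ∫ ξ : Ed d,
            ‖g ξ * Complex.exp (Complex.I * ((t * Λ ξ : ℝ) : ℂ))‖)
            = fun _ : ℝ => ∫ ξ : Ed d, ‖g ξ‖ := by
          funext t
          congr 1
          funext ξ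
          rw [norm_mul, _root_.norm_exp_I_mul_ofReal, mul_one]
        simp only [Function.uncurry_apply_pair]
        rw [heq]
        exact integrableOn_const (by rw [Real.volume_Ioc]; exact ENNReal.ofReal_ne_top)
    have hswap := integral_integral_swap hprod
    have hCint : IntegrableOn C (Set.Ioc (0:ℝ) T) volume := by
      exact hprod.integral_prod_left
    have e1 : ∫ t in Set.Ioc (0:ℝ) T, (C t).re = (∫ t in Set.Ioc (0:ℝ) T, C t).re := by
      have := Complex.reCLM.integral_comp_comm hCint
      simpa using this
    have e2 : ∫ t in Set.Ioc (0:ℝ) T, C t = ∫ ξ : Ed d, g ξ * K T ξ := by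
      rw [hC_def]
      rw [hswap]
      congr 1
      funext ξ
      rw [hK_def, integral_const_mul]
    have e3 : ∫ ξ : Ed d, g ξ * J T ξ = ((T:ℂ))⁻¹ * ∫ ξ : Ed d, g ξ * K T ξ := by
      rw [← integral_const_mul]
      refine integral_congr_ae ?_
      filter_upwards [hΛ] with ξ hξ
      rw [hKJ T hT ξ (ne_of_gt hξ), hJ_def]
      ring
    rw [e1, e2, e3, ← Complex.ofReal_inv, Complex.re_ofReal_mul]
  -- DCT
  have hΛm : Measurable Λ := hΛc.measurable
  have hD : Tendsto (fun T : ℝ => ∫ ξ : Ed d, g ξ * J T ξ) atTop (nhds 0) := by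
    have h0 : (0 : ℂ) = ∫ ξ : Ed d, (0:ℂ) := by simp
    rw [h0]
    refine tendsto_integral_filter_of_dominated_convergence (bound := fun ξ => ‖g ξ‖)
      ?_ ?_ hg.norm ?_
    · refine Filter.Eventually.of_forall fun T => ?_
      refine hg.aestronglyMeasurable.mul (Measurable.aestronglyMeasurable ?_)
      rw [hJ_def]
      fun_prop
    · filter_upwards [eventually_ge_atTop (1:ℝ)] with T hT1
      have hT : (0:ℝ) < T := lt_of_lt_of_le one_pos hT1
      filter_upwards [hΛ] with ξ hξ
      rw [norm_mul]
      have hJnorm : ‖J T ξ‖ = T⁻¹ * ‖K T ξ‖ := by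
        rw [hJ_def, hKJ T hT ξ (ne_of_gt hξ), norm_mul]
        congr 1
        rw [norm_inv, Complex.norm_real, Real.norm_eq_abs, abs_of_pos hT]
      have : ‖J T ξ‖ ≤ 1 := by
        rw [hJnorm]
        calc T⁻¹ * ‖K T ξ‖ ≤ T⁻¹ * T := by
              have := hKbound T hT ξ
              gcongr
          _ = 1 := inv_mul_cancel₀ (ne_of_gt hT)
      calc ‖g ξ‖ * ‖J T ξ‖ ≤ ‖g ξ‖ * 1 := by gcongr
        _ = ‖g ξ‖ := mul_one _
    · filter_upwards [hΛ] with ξ hξ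
      refine squeeze_zero_norm' ?_
        (by simpa using (tendsto_inv_atTop_zero (𝕜 := ℝ)).const_mul (‖g ξ‖ * (2 / Λ ξ)))
      filter_upwards [eventually_ge_atTop (1:ℝ)] with T hT1
      have hT : (0:ℝ) < T := lt_of_lt_of_le one_pos hT1
      rw [norm_mul, hJ_def]
      have hnum : ‖Complex.exp (Complex.I * ((Λ ξ : ℝ):ℂ) * (T:ℂ)) - 1‖ ≤ 2 := by
        refine (norm_sub_le _ _).trans ?_
        have : Complex.I * ((Λ ξ : ℝ):ℂ) * (T:ℂ) = Complex.I * ((Λ ξ * T : ℝ):ℂ) := by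
          push_cast; ring
        rw [this, _root_.norm_exp_I_mul_ofReal, norm_one]
        norm_num
      have hden : ‖Complex.I * ((Λ ξ : ℝ):ℂ)‖ = Λ ξ := by
        rw [norm_mul, Complex.norm_I, one_mul, Complex.norm_real, Real.norm_eq_abs,
          abs_of_pos hξ]
      calc ‖g ξ‖ * ‖((T:ℂ))⁻¹ * ((Complex.exp (Complex.I * ((Λ ξ : ℝ):ℂ) * (T:ℂ)) - 1) /
            (Complex.I * ((Λ ξ : ℝ):ℂ)))‖
          = ‖g ξ‖ * (T⁻¹ * (‖Complex.exp (Complex.I * ((Λ ξ : ℝ):ℂ) * (T:ℂ)) - 1‖ / Λ ξ)) := by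
            rw [norm_mul, norm_div, hden, norm_inv, Complex.norm_real, Real.norm_eq_abs,
              abs_of_pos hT]
        _ ≤ ‖g ξ‖ * (T⁻¹ * (2 / Λ ξ)) := by
            have h1 : (0:ℝ) ≤ ‖g ξ‖ := norm_nonneg _
            have h2 : (0:ℝ) < Λ ξ := hξ
            gcongr
        _ = ‖g ξ‖ * (2 / Λ ξ) * T⁻¹ := by ring
  have h0re : Tendsto (fun T : ℝ => (∫ ξ : Ed d, g ξ * J T ξ).re) atTop (nhds 0) := by
    have := (Complex.continuous_re.tendsto (0:ℂ)).comp hD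
    exact this
  have hfin : A / 2 = 0 := by
    refine tendsto_nhds_unique (cesA.congr' ?_) h0re
    filter_upwards [eventually_gt_atTop (0:ℝ)] with T hT
    exact hstep T hT
  linarith

private lemma FT_eq {d : ℕ} (f : Ed d → ℂ) (ξ : Ed d) :
    FT f ξ = (((2 * Real.pi) ^ (-(d : ℝ) / 2) : ℝ) : ℂ) *
      𝓕 f ((2 * Real.pi)⁻¹ • ξ) := by
  rw [FT, Real.fourier_eq']
  congr 1
  refine integral_congr_ae (Filter.Eventually.of_forall fun v => ?_)
  show Complex.exp (-Complex.I * (⟪v, ξ⟫ : ℂ)) * f v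
      = Complex.exp ((↑(-2 * Real.pi * ⟪v, (2 * Real.pi)⁻¹ • ξ⟫) : ℂ) * Complex.I) • f v
  have h2π : (2 * Real.pi) ≠ 0 := by positivity
  have hinner : ⟪v, (2 * Real.pi)⁻¹ • ξ⟫ = (2 * Real.pi)⁻¹ * ⟪v, ξ⟫ :=
    real_inner_smul_right _ _ _
  rw [smul_eq_mul, hinner]
  have harg : (-2 * Real.pi * ((2 * Real.pi)⁻¹ * ⟪v, ξ⟫) : ℝ) = -⟪v, ξ⟫ := by
    field_simp
  rw [harg]
  congr 1
  push_cast
  ring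

set_option maxHeartbeats 1000000 in
private lemma FT_surj {d : ℕ} (h : SchwartzMap (Ed d) ℂ) :
    ∃ g : SchwartzMap (Ed d) ℂ, ∀ ξ : Ed d, FT (fun y => g y) ξ = h ξ := by
  set c : ℝ := (2 * Real.pi) ^ (-(d : ℝ) / 2) with hc_def
  have hc : 0 < c := Real.rpow_pos_of_pos (by positivity) _
  set D : Ed d → Ed d := fun x => (2 * Real.pi) • x with hD_def
  have h2π : (0:ℝ) < 2 * Real.pi := by positivity
  have temp : Function.HasTemperateGrowth D := by
    have hDeq : D = ⇑((2 * Real.pi : ℝ) • (ContinuousLinearMap.id ℝ (Ed d))) := by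
      funext x; simp [hD_def]
    rw [hDeq]
    exact ContinuousLinearMap.hasTemperateGrowth _
  have anti : AntilipschitzWith ((2 * Real.pi)⁻¹).toNNReal D := by
    refine AntilipschitzWith.of_le_mul_dist fun x y => ?_
    rw [hD_def]
    simp only
    rw [dist_smul₀, Real.norm_eq_abs, abs_of_pos h2π,
      Real.coe_toNNReal _ (le_of_lt (inv_pos.2 h2π))]
    rw [← mul_assoc, inv_mul_cancel₀ (ne_of_gt h2π), one_mul]
  set h₂ : SchwartzMap (Ed d) ℂ := ((c⁻¹ : ℝ) : ℂ) •
    (SchwartzMap.compCLMOfAntilipschitz ℂ temp anti h) with hh₂_def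
  refine ⟨(𝓕⁻ h₂ : SchwartzMap (Ed d) ℂ), fun ξ => ?_⟩
  have hFg : 𝓕 ⇑(𝓕⁻ h₂ : SchwartzMap (Ed d) ℂ) = ⇑h₂ := by
    rw [← SchwartzMap.fourier_coe, FourierTransform.fourier_fourierInv_eq]
  rw [FT_eq, hFg]
  have hh₂ : h₂ ((2 * Real.pi)⁻¹ • ξ) = ((c⁻¹ : ℝ) : ℂ) * h ((2 * Real.pi) • (2 * Real.pi)⁻¹ • ξ) := by
    rw [hh₂_def]
    simp [smul_eq_mul, hD_def]
  rw [hh₂, smul_smul, mul_inv_cancel₀ (ne_of_gt h2π), one_smul, ← mul_assoc,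
    ← Complex.ofReal_mul, mul_inv_cancel₀ (ne_of_gt hc)]
  simp

set_option maxHeartbeats 1000000 in
private lemma ae_zero_of_hat_ae_zero {d : ℕ} {f fhat : Ed d → ℂ} (hf : IsFT f fhat)
    (h0 : fhat =ᵐ[volume] 0) : f =ᵐ[volume] 0 := by
  have hloc : LocallyIntegrable f volume :=
    hf.memL2.locallyIntegrable one_le_two
  refine ae_eq_zero_of_integral_contDiff_smul_eq_zero hloc ?_
  intro ψ hψsm hψsupp
  set ψc : Ed d → ℂ := fun x => (ψ x : ℂ) with hψc_def
  have hsm : ContDiff ℝ (⊤:ℕ∞) ψc := Complex.ofRealCLM.contDiff.comp hψsm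
  have hsupp : HasCompactSupport ψc :=
    hψsupp.comp_left (g := fun r : ℝ => (r : ℂ)) (by simp)
  have hdecay : ∀ (k n : ℕ), ∃ C, ∀ x, ‖x‖^k * ‖iteratedFDeriv ℝ n ψc x‖ ≤ C := by
    intro k n
    have hscont : Continuous fun x => ‖x‖^k * ‖iteratedFDeriv ℝ n ψc x‖ :=
      ((continuous_norm.pow k).mul (hsm.continuous_iteratedFDeriv (by exact_mod_cast le_top)).norm)
    have hssupp : HasCompactSupport fun x => ‖x‖^k * ‖iteratedFDeriv ℝ n ψc x‖ :=
      ((hsupp.iteratedFDeriv n).norm.mul_left)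
    obtain ⟨C, hC⟩ := hscont.bounded_above_of_compact_support hssupp
    exact ⟨C, fun x => by
      have := hC x
      rw [Real.norm_eq_abs] at this
      exact le_trans (le_abs_self _) this⟩
  set S : SchwartzMap (Ed d) ℂ := ⟨ψc, hsm, hdecay⟩ with hS_def
  obtain ⟨gS, hgS⟩ := FT_surj S
  have hdual := hf.duality gS
  have hL : ∫ ξ : Ed d, fhat ξ * gS ξ = 0 := by
    rw [show (0:ℂ) = ∫ ξ : Ed d, (0:ℂ) by simp]
    refine integral_congr_ae ?_
    filter_upwards [h0] with ξ hξ
    simp [hξ]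
  have hR : ∫ x : Ed d, f x * ψc x = 0 := by
    rw [← hL, hdual]
    refine integral_congr_ae (Filter.Eventually.of_forall fun x => ?_)
    show f x * ψc x = f x * FT (fun y => gS y) x
    rw [hgS x]
    rfl
  rw [← hR]
  refine integral_congr_ae (Filter.Eventually.of_forall fun x => ?_)
  rw [hψc_def]
  simp only [Complex.real_smul]
  ring


/-- A nontrivial traveling solitary wave `u(t) = e^{iωt}Q(· - vt)` with
`|v| < 1`, `ω ≥ 0` cannot scatter to a free half-wave: if
`‖u(t) - e^{-it√(-Δ)}φ‖_{H^{1/2}} → 0` as `t → +∞` (or `t → -∞`) for some `φ ∈ H^{1/2}`,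
then `φ = 0` and `Q = 0`. -/
theorem traveling_wave_no_scattering
    (d : ℕ) (hd : 1 ≤ d) (p : ℝ) (hp : 1 < p)
    (hpstar : 2 ≤ d → p < ((d : ℝ) + 1) / ((d : ℝ) - 1))
    (v : Ed d) (hv : ‖v‖ < 1) (ω : ℝ) (hω : 0 ≤ ω)
    (Q Qhat : Ed d → ℂ) (hsol : IsWeakSolHW p v ω Q Qhat)
    (φ φhat : Ed d → ℂ) (hφ : H12 φ φhat)
    (hconv : Filter.Tendsto (scatDistSq v ω Qhat φhat) Filter.atTop (nhds 0) ∨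
             Filter.Tendsto (scatDistSq v ω Qhat φhat) Filter.atBot (nhds 0)) :
    φ =ᵐ[volume] 0 ∧ Q =ᵐ[volume] 0 := by
  obtain ⟨hQH12, hQLp, hweak⟩ := hsol
  obtain ⟨hQFT, hQI⟩ := hQH12
  obtain ⟨hφFT, hφI⟩ := hφ
  haveI : Nontrivial (Ed d) := by
    refine ⟨EuclideanSpace.single ⟨0, hd⟩ (1:ℝ), 0, fun hcontra => ?_⟩
    have h1 := congrArg (· ⟨0, hd⟩) hcontra
    rw [EuclideanSpace.single_apply] at h1
    simp at h1
  set Λ : Ed d → ℝ := fun ξ => ω - ⟪v, ξ⟫ + ‖ξ‖ with hΛ_def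
  have hΛc : Continuous Λ := by
    refine Continuous.add ?_ continuous_norm
    exact continuous_const.sub (Continuous.inner continuous_const continuous_id)
  have hΛpos : ∀ᵐ ξ : Ed d ∂(volume : Measure (Ed d)), 0 < Λ ξ := by
    have hsing : (volume : Measure (Ed d)) {0} = 0 := measure_singleton 0
    rw [ae_iff]
    refine measure_mono_null (fun ξ hξ => ?_) hsing
    simp only [Set.mem_setOf_eq, not_lt] at hξ
    simp only [Set.mem_singleton_iff]
    by_contra hne
    have hpos : 0 < ‖ξ‖ := norm_pos_iff.2 hne
    have hinner : |⟪v, ξ⟫| ≤ ‖v‖ * ‖ξ‖ := abs_real_inner_le_norm v ξ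
    have h1 : ⟪v, ξ⟫ ≤ ‖v‖ * ‖ξ‖ := le_trans (le_abs_self _) hinner
    have : 0 < Λ ξ := by
      rw [hΛ_def]
      have : ‖v‖ * ‖ξ‖ < ‖ξ‖ := by nlinarith
      simp only
      nlinarith
    linarith
  set g : Ed d → ℂ := fun ξ => ((1 + ‖ξ‖ : ℝ) : ℂ) * (Qhat ξ * (starRingEnd ℂ) (φhat ξ))
    with hg_def
  have hQm := hQFT.memL2_hat.aestronglyMeasurable
  have hφm := hφFT.memL2_hat.aestronglyMeasurable
  have hgmeas : AEStronglyMeasurable g (volume : Measure (Ed d)) := by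
    refine AEStronglyMeasurable.mul ?_ (hQm.mul ?_)
    · exact (Complex.continuous_ofReal.comp
        (continuous_const.add continuous_norm)).aestronglyMeasurable
    · exact Complex.continuous_conj.comp_aestronglyMeasurable hφm
  have hsum_int : Integrable
      (fun ξ : Ed d => (1 + ‖ξ‖) * (‖Qhat ξ‖^2 + ‖φhat ξ‖^2)) volume := by
    have h := hQI.add hφI
    refine h.congr (Filter.Eventually.of_forall fun ξ => ?_)
    simp only [Pi.add_apply]
    ring
  have hgint : Integrable g volume := by
    refine hsum_int.mono' hgmeas (Filter.Eventually.of_forall fun ξ => ?_)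
    rw [hg_def]
    simp only
    rw [norm_mul, norm_mul, Complex.norm_real, Real.norm_eq_abs, RCLike.norm_conj,
      abs_of_pos (by positivity : (0:ℝ) < 1 + ‖ξ‖)]
    have h1 : ‖Qhat ξ‖ * ‖φhat ξ‖ ≤ ‖Qhat ξ‖^2 + ‖φhat ξ‖^2 := by nlinarith [sq_nonneg (‖Qhat ξ‖ - ‖φhat ξ‖), norm_nonneg (Qhat ξ), norm_nonneg (φhat ξ)]
    have h2 : (0:ℝ) < 1 + ‖ξ‖ := by positivity
    nlinarith
  set A : ℝ := ∫ ξ : Ed d, (1 + ‖ξ‖) * (‖Qhat ξ‖^2 + ‖φhat ξ‖^2) with hA_def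
  have hsl : ∀ (g₀ : Ed d → ℂ), Integrable g₀ volume → AEStronglyMeasurable g₀ (volume : Measure (Ed d)) → ∀ t : ℝ,
      Integrable (fun ξ : Ed d => g₀ ξ * Complex.exp (Complex.I * ((t * Λ ξ : ℝ) : ℂ))) volume := by
    intro g₀ hg₀ hg₀m t
    have hc : Continuous fun ξ : Ed d => Complex.exp (Complex.I * ((t * Λ ξ : ℝ) : ℂ)) :=
      Complex.continuous_exp.comp (continuous_const.mul
        (Complex.continuous_ofReal.comp (continuous_const.mul hΛc)))
    refine hg₀.norm.mono' (hg₀m.mul hc.aestronglyMeasurable)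
      (Filter.Eventually.of_forall fun ξ => ?_)
    exact le_of_eq (by rw [norm_mul, _root_.norm_exp_I_mul_ofReal, mul_one])
  have hident : ∀ t : ℝ, scatDistSq v ω Qhat φhat t
      = A - 2 * (∫ ξ : Ed d, g ξ * Complex.exp (Complex.I * ((t * Λ ξ : ℝ) : ℂ))).re := by
    intro t
    have hint2 := hsl g hgint hgmeas t
    have hpt : ∀ ξ : Ed d, (1 + ‖ξ‖) *
        ‖Complex.exp (Complex.I * ((ω * t - t * ⟪v, ξ⟫ : ℝ) : ℂ)) * Qhat ξ
          - Complex.exp (-Complex.I * ((t * ‖ξ‖ : ℝ) : ℂ)) * φhat ξ‖ ^ 2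
        = (1 + ‖ξ‖) * (‖Qhat ξ‖^2 + ‖φhat ξ‖^2)
          - 2 * (g ξ * Complex.exp (Complex.I * ((t * Λ ξ : ℝ) : ℂ))).re := by
      intro ξ
      have hci := cross_identity (1 + ‖ξ‖) (ω * t - t * ⟪v, ξ⟫) (t * ‖ξ‖) (Qhat ξ) (φhat ξ)
      have harg : (ω * t - t * ⟪v, ξ⟫) + (t * ‖ξ‖) = t * Λ ξ := by rw [hΛ_def]; ring
      rw [harg] at hci
      rw [hci, hg_def]
    rw [scatDistSq]
    calc ∫ ξ : Ed d, (1 + ‖ξ‖) *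
        ‖Complex.exp (Complex.I * ((ω * t - t * ⟪v, ξ⟫ : ℝ) : ℂ)) * Qhat ξ
          - Complex.exp (-Complex.I * ((t * ‖ξ‖ : ℝ) : ℂ)) * φhat ξ‖ ^ 2
        = ∫ ξ : Ed d, ((1 + ‖ξ‖) * (‖Qhat ξ‖^2 + ‖φhat ξ‖^2)
          - 2 * (g ξ * Complex.exp (Complex.I * ((t * Λ ξ : ℝ) : ℂ))).re) := by
          exact integral_congr_ae (Filter.Eventually.of_forall fun ξ => hpt ξ)
      _ = A - 2 * (∫ ξ : Ed d, g ξ * Complex.exp (Complex.I * ((t * Λ ξ : ℝ) : ℂ))).re := by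
          have h2int : Integrable
              (fun ξ : Ed d => 2 * (g ξ * Complex.exp (Complex.I * ((t * Λ ξ : ℝ) : ℂ))).re)
              volume := (hint2.re).const_mul 2
          rw [integral_sub hsum_int h2int, integral_const_mul, hA_def]
          congr 1
          congr 1
          exact Complex.reCLM.integral_comp_comm hint2
  have hA0 : A = 0 := by
    rcases hconv with hc | hc
    · exact core g hgint Λ hΛc hΛpos A (Filter.Tendsto.congr (fun t => hident t) hc)
    · have hgc_meas : AEStronglyMeasurable (fun ξ : Ed d => (starRingEnd ℂ) (g ξ))
          (volume : Measure (Ed d)) := Complex.continuous_conj.comp_aestronglyMeasurable hgmeas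
      have hgcint : Integrable (fun ξ : Ed d => (starRingEnd ℂ) (g ξ)) volume := by
        refine hgint.norm.mono' hgc_meas (Filter.Eventually.of_forall fun ξ => ?_)
        rw [RCLike.norm_conj]
      refine core (fun ξ => (starRingEnd ℂ) (g ξ)) hgcint Λ hΛc hΛpos A ?_
      have hneg : Tendsto (fun t : ℝ => scatDistSq v ω Qhat φhat (-t)) atTop (nhds 0) :=
        hc.comp tendsto_neg_atTop_atBot
      refine Filter.Tendsto.congr (fun t => ?_) hneg
      rw [hident (-t)]
      congr 2
      have h1 := Complex.reCLM.integral_comp_comm (hsl g hgint hgmeas (-t))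
      have h2 := Complex.reCLM.integral_comp_comm (hsl _ hgcint hgc_meas t)
      simp only [Complex.reCLM_apply] at h1 h2
      rw [← h1, ← h2]
      refine integral_congr_ae (Filter.Eventually.of_forall fun ξ => ?_)
      show (g ξ * Complex.exp (Complex.I * ((-t * Λ ξ : ℝ) : ℂ))).re
        = ((starRingEnd ℂ) (g ξ) * Complex.exp (Complex.I * ((t * Λ ξ : ℝ) : ℂ))).re
      have : (starRingEnd ℂ) ((starRingEnd ℂ) (g ξ) * Complex.exp (Complex.I * ((t * Λ ξ : ℝ) : ℂ)))
          = g ξ * Complex.exp (Complex.I * ((-t * Λ ξ : ℝ) : ℂ)) := by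
        rw [map_mul, Complex.conj_conj, ← Complex.exp_conj]
        congr 2
        simp only [map_mul, Complex.conj_I, Complex.conj_ofReal]
        push_cast
        ring
      rw [← this, Complex.conj_re]
  have hzero : (fun ξ : Ed d => (1 + ‖ξ‖) * (‖Qhat ξ‖^2 + ‖φhat ξ‖^2)) =ᵐ[volume] 0 := by
    have hnn : 0 ≤ᵐ[volume] fun ξ : Ed d => (1 + ‖ξ‖) * (‖Qhat ξ‖^2 + ‖φhat ξ‖^2) :=
      Filter.Eventually.of_forall fun ξ => by positivity
    exact (integral_eq_zero_iff_of_nonneg_ae hnn hsum_int).1 hA0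
  have hQhat0 : Qhat =ᵐ[volume] 0 := by
    filter_upwards [hzero] with ξ hξ
    simp only [Pi.zero_apply] at hξ ⊢
    have h2 : (0:ℝ) < 1 + ‖ξ‖ := by positivity
    have h3 : ‖Qhat ξ‖^2 + ‖φhat ξ‖^2 = 0 := by
      by_contra hne
      have : 0 < ‖Qhat ξ‖^2 + ‖φhat ξ‖^2 :=
        lt_of_le_of_ne (by positivity) (Ne.symm hne)
      nlinarith
    have : ‖Qhat ξ‖ = 0 := by nlinarith [sq_nonneg ‖Qhat ξ‖, sq_nonneg ‖φhat ξ‖, norm_nonneg (Qhat ξ), norm_nonneg (φhat ξ)]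
    exact norm_eq_zero.1 this
  have hφhat0 : φhat =ᵐ[volume] 0 := by
    filter_upwards [hzero] with ξ hξ
    simp only [Pi.zero_apply] at hξ ⊢
    have h2 : (0:ℝ) < 1 + ‖ξ‖ := by positivity
    have h3 : ‖Qhat ξ‖^2 + ‖φhat ξ‖^2 = 0 := by
      by_contra hne
      have : 0 < ‖Qhat ξ‖^2 + ‖φhat ξ‖^2 :=
        lt_of_le_of_ne (by positivity) (Ne.symm hne)
      nlinarith
    have : ‖φhat ξ‖ = 0 := by nlinarith [sq_nonneg ‖Qhat ξ‖, sq_nonneg ‖φhat ξ‖, norm_nonneg (Qhat ξ), norm_nonneg (φhat ξ)]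
    exact norm_eq_zero.1 this
  constructor
  · exact ae_zero_of_hat_ae_zero hφFT hφhat0
  · have hid := hweak Q Qhat ⟨hQFT, hQI⟩ hQLp
    have hLHS : ∫ ξ : Ed d, ((‖ξ‖ - ⟪v, ξ⟫ + ω : ℝ) : ℂ) * (starRingEnd ℂ) (Qhat ξ) * Qhat ξ
        = 0 := by
      rw [show (0:ℂ) = ∫ ξ : Ed d, (0:ℂ) by simp]
      refine integral_congr_ae ?_
      filter_upwards [hQhat0] with ξ hξ
      simp only [Pi.zero_apply] at hξ
      simp [hξ]
    rw [hLHS] at hid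
    have hpt : ∀ z : ℂ, (starRingEnd ℂ) z * ((‖z‖ ^ (p - 1) : ℝ) : ℂ) * z
        = ((‖z‖ ^ (p + 1) : ℝ) : ℂ) := by
      intro z
      have h1 : (starRingEnd ℂ) z * ((‖z‖ ^ (p - 1) : ℝ) : ℂ) * z
          = ((‖z‖ ^ (p - 1) : ℝ) : ℂ) * (z * (starRingEnd ℂ) z) := by ring
      rw [h1, Complex.mul_conj]
      have h2 : Complex.normSq z = ‖z‖^(2:ℕ) := by
        rw [Complex.normSq_eq_norm_sq]
      rw [h2, ← Complex.ofReal_mul]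
      congr 1
      rcases eq_or_lt_of_le (norm_nonneg z) with hz | hz
      · rw [← hz, Real.zero_rpow (by linarith : p - 1 ≠ 0),
          Real.zero_rpow (by linarith : p + 1 ≠ 0)]
        simp
      · rw [← Real.rpow_natCast ‖z‖ 2, ← Real.rpow_add hz]
        congr 1
        ring
    have hcoe : ∫ x : Ed d, ((‖Q x‖ ^ (p + 1) : ℝ) : ℂ) = 0 := by
      rw [show (∫ x : Ed d, ((‖Q x‖ ^ (p + 1) : ℝ) : ℂ))
          = ∫ x : Ed d, (starRingEnd ℂ) (Q x) * ((‖Q x‖ ^ (p - 1) : ℝ) : ℂ) * Q x from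
        integral_congr_ae (Filter.Eventually.of_forall fun x => (hpt (Q x)).symm), ← hid]
    have hp1 : (0:ℝ) < p + 1 := by linarith
    have hint : Integrable (fun x : Ed d => ‖Q x‖ ^ (p + 1)) volume := by
      have := hQLp.integrable_norm_rpow (by
          simp [ENNReal.ofReal_eq_zero]; linarith) ENNReal.ofReal_ne_top
      rwa [ENNReal.toReal_ofReal (le_of_lt hp1)] at this
    have hcomm := Complex.ofRealCLM.integral_comp_comm hint
    simp only [Complex.ofRealCLM_apply] at hcomm
    rw [hcomm] at hcoe
    have hreal : ∫ x : Ed d, ‖Q x‖ ^ (p + 1) = 0 := by exact_mod_cast hcoe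
    have hnn : 0 ≤ᵐ[volume] fun x : Ed d => ‖Q x‖ ^ (p + 1) :=
      Filter.Eventually.of_forall fun x => Real.rpow_nonneg (norm_nonneg _) _
    have hz := (integral_eq_zero_iff_of_nonneg_ae hnn hint).1 hreal
    filter_upwards [hz] with x hx
    simp only [Pi.zero_apply] at hx ⊢
    have : ‖Q x‖ = 0 := by
      by_contra hne
      have h0 : 0 < ‖Q x‖ := lt_of_le_of_ne (norm_nonneg _) (Ne.symm hne)
      have := Real.rpow_pos_of_pos h0 (p + 1)
      linarith
    exact norm_eq_zero.1 this
end
end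

section
/- Let d ≥ 1 and let D ⊂ ℝ be a discrete set, i.e. every point of D is isolated in D. Suppose f ∈ L²(ℝ^d,ℂ) has finite Gagliardo H^{1/2}-seminorm, ∬_{ℝ^d×ℝ^d} |f(x)−f(y)|²/|x−y|^{d+1} dx dy < ∞, and satisfies |f(x)| ∈ D for almost every x ∈ ℝ^d. Then f = 0 almost everywhere. -/
noncomputable section

open MeasureTheory Filter Complex
open scoped RealInnerProductSpace ENNReal

/-- Every point of `D` is isolated in `D`. -/
def DiscreteIn (D : Set ℝ) : Prop :=
  ∀ x ∈ D, ∃ ε > 0, ∀ y ∈ D, |y - x| < ε → y = x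

open Metric Set Topology

namespace DMAux

variable {d : ℕ}

def del (E : Set (Ed d)) (h : Ed d) : ℝ≥0∞ := volume (E \ (· + h) ⁻¹' E)

lemma discreteIn_countable {D : Set ℝ} (hD : DiscreteIn D) : D.Countable := by
  have key : ∀ x : D, ∃ pq : ℚ × ℚ, (pq.1 : ℝ) < x ∧ (x : ℝ) < pq.2 ∧
      ∀ y ∈ D, (pq.1 : ℝ) < y → y < (pq.2 : ℝ) → y = x := by
    rintro ⟨x, hx⟩
    obtain ⟨ε, hε, h⟩ := hD x hx
    obtain ⟨p, hp1, hp2⟩ := exists_rat_btwn (show x - ε < x by linarith)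
    obtain ⟨q, hq1, hq2⟩ := exists_rat_btwn (show x < x + ε by linarith)
    exact ⟨(p, q), hp2, hq1, fun y hy h1 h2 =>
      h y hy (by rw [abs_sub_lt_iff]; constructor <;> simp_all <;> linarith)⟩
  choose F hF1 hF2 hF3 using key
  have hinj : Function.Injective F := by
    intro a b hab
    have h1 := hF1 b; have h2 := hF2 b
    rw [← hab] at h1 h2
    exact (Subtype.ext (hF3 a b b.2 h1 h2)).symm
  have : Countable D := ⟨fun x => Encodable.encode (F x), fun a b h => hinj (Encodable.encode_injective h)⟩
  exact Set.countable_coe_iff.mp this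

lemma del_add_le (E : Set (Ed d)) (h₁ h₂ : Ed d) :
    del E (h₁ + h₂) ≤ del E h₁ + del E h₂ := by
  have hsub : E \ (· + (h₁ + h₂)) ⁻¹' E ⊆
      (E \ (· + h₁) ⁻¹' E) ∪ ((· + h₁) ⁻¹' (E \ (· + h₂) ⁻¹' E)) := by
    rintro x ⟨hxE, hx⟩
    by_cases h : x + h₁ ∈ E
    · right
      simp only [Set.mem_preimage, Set.mem_diff] at *
      exact ⟨h, by rwa [← add_assoc] at hx⟩
    · left; exact ⟨hxE, h⟩
  calc del E (h₁ + h₂) ≤ _ := measure_mono hsub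
    _ ≤ _ := measure_union_le _ _
    _ = del E h₁ + del E h₂ := by
        rw [del, del, measure_preimage_add_right]

lemma del_pow_le (E : Set (Ed d)) (h : Ed d) (m : ℕ) :
    del E ((2 ^ m : ℝ) • h) ≤ 2 ^ m * del E h := by
  induction m with
  | zero => simp
  | succ k ih =>
      have : ((2 ^ (k+1) : ℝ)) • h = (2 ^ k : ℝ) • h + (2 ^ k : ℝ) • h := by
        rw [← add_smul]; ring_nf
      rw [this]
      calc del E _ ≤ del E ((2^k : ℝ) • h) + del E ((2^k : ℝ) • h) := del_add_le _ _ _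
        _ ≤ 2 ^ k * del E h + 2 ^ k * del E h := add_le_add ih ih
        _ = 2 ^ (k+1) * del E h := by rw [pow_succ]; ring

lemma del_far (E : Set (Ed d)) (hE : MeasurableSet E)
    (hE0 : volume E ≠ 0) (hEt : volume E ≠ ∞) :
    ∃ T : ℝ, 0 < T ∧ ∀ h : Ed d, T ≤ ‖h‖ → volume E / 2 ≤ del E h := by
  -- find R with small tail
  obtain ⟨R, hR⟩ : ∃ R : ℕ, volume (E \ closedBall (0 : Ed d) R) < volume E / 4 := by
    have hmono : Antitone fun n : ℕ => E \ closedBall (0 : Ed d) n := fun m n hmn =>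
      diff_subset_diff_right (closedBall_subset_closedBall (by exact_mod_cast hmn))
    have hempty : ⋂ n : ℕ, E \ closedBall (0 : Ed d) n = ∅ := by
      ext x
      simp only [Set.mem_iInter, Set.mem_empty_iff_false, iff_false, not_forall]
      obtain ⟨n, hn⟩ := exists_nat_ge ‖x‖
      exact ⟨n, fun hmem => hmem.2 (by simpa [mem_closedBall, dist_zero_right] using hn)⟩
    have htend : Tendsto (fun n : ℕ => volume (E \ closedBall (0 : Ed d) n)) atTop (𝓝 0) := by
      have := tendsto_measure_iInter_atTop
        (μ := (volume : Measure (Ed d)))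
        (s := fun n : ℕ => E \ closedBall (0 : Ed d) n)
        (fun n => (hE.diff measurableSet_closedBall).nullMeasurableSet) hmono
        ⟨0, by exact ne_top_of_le_ne_top hEt (measure_mono diff_subset)⟩
      rw [hempty] at this
      simpa [Function.comp_def] using this
    have hpos : (0 : ℝ≥0∞) < volume E / 4 := ENNReal.div_pos hE0 (by norm_num)
    exact (htend.eventually_lt_const hpos).exists
  refine ⟨2 * R + 1, by positivity, fun h hh => ?_⟩
  set P : Set (Ed d) := (· + h) ⁻¹' E with hP
  have hPm : MeasurableSet P := hE.preimage (measurable_add_const h)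
  -- intersection bound
  have hint : volume (E ∩ P) ≤ volume E / 2 := by
    have hsub : E ∩ P ⊆ (E \ closedBall (0 : Ed d) R) ∪
        ((· + h) ⁻¹' (E \ closedBall (0 : Ed d) R)) := by
      rintro x ⟨hxE, hxP⟩
      by_cases hx : x ∈ closedBall (0 : Ed d) R
      · right
        simp only [Set.mem_preimage, Set.mem_diff]
        refine ⟨hxP, fun hc => ?_⟩
        rw [mem_closedBall, dist_zero_right] at hx hc
        have : ‖h‖ ≤ 2 * R := by
          calc ‖h‖ = ‖(x + h) - x‖ := by rw [add_sub_cancel_left]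
            _ ≤ ‖x + h‖ + ‖x‖ := norm_sub_le _ _
            _ ≤ 2 * R := by linarith
        linarith
      · left; exact ⟨hxE, hx⟩
    calc volume (E ∩ P) ≤ _ := measure_mono hsub
      _ ≤ volume (E \ closedBall (0 : Ed d) R) + volume ((· + h) ⁻¹' (E \ closedBall (0 : Ed d) R)) :=
          measure_union_le _ _
      _ = volume (E \ closedBall (0 : Ed d) R) + volume (E \ closedBall (0 : Ed d) R) := by
          rw [measure_preimage_add_right]
      _ ≤ volume E / 4 + volume E / 4 := add_le_add hR.le hR.le
      _ ≤ volume E / 2 := by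
          rw [← ENNReal.add_halves (volume E / 2)]
          have h42 : volume E / 4 = volume E / 2 / 2 := by
            simp only [div_eq_mul_inv, mul_assoc]
            congr 1
            rw [← ENNReal.mul_inv (Or.inr ENNReal.ofNat_ne_top) (Or.inl ENNReal.ofNat_ne_top)]
            norm_num
          rw [h42]
  -- conclude
  have hdecomp : del E h + volume (E ∩ P) = volume E := by
    rw [del, ← hP]
    exact measure_diff_add_inter E hPm
  have hfin : volume (E ∩ P) ≠ ∞ := ne_top_of_le_ne_top hEt (measure_mono inter_subset_left)
  rw [← ENNReal.add_le_add_iff_right hfin, hdecomp]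
  calc volume E / 2 + volume (E ∩ P) ≤ volume E / 2 + volume E / 2 := add_le_add le_rfl hint
    _ = volume E := ENNReal.add_halves _

lemma exists_pow_between {T r : ℝ} (hT : 0 < T) (hr : 0 < r) (hrT : r ≤ T) :
    ∃ m : ℕ, T ≤ 2 ^ m * r ∧ 2 ^ m * r ≤ 2 * T := by
  have hex : ∃ m : ℕ, T ≤ 2 ^ m * r := by
    obtain ⟨m, hm⟩ := pow_unbounded_of_one_lt (T / r) one_lt_two
    exact ⟨m, by rw [div_lt_iff₀ hr] at hm; nlinarith⟩
  refine ⟨Nat.find hex, Nat.find_spec hex, ?_⟩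
  rcases Nat.eq_zero_or_pos (Nat.find hex) with h0 | hpos
  · rw [h0]; nlinarith
  · obtain ⟨k, hk⟩ := Nat.exists_eq_succ_of_ne_zero hpos.ne'
    have := Nat.find_min hex (m := k) (by omega)
    push_neg at this
    rw [hk, pow_succ]
    nlinarith

lemma del_small (E : Set (Ed d)) {T : ℝ} (hT : 0 < T)
    (hfar : ∀ h : Ed d, T ≤ ‖h‖ → volume E / 2 ≤ del E h)
    (hpow : ∀ (h : Ed d) (m : ℕ), del E ((2 ^ m : ℝ) • h) ≤ 2 ^ m * del E h)
    {h : Ed d} (h0 : h ≠ 0) (hhT : ‖h‖ ≤ T) :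
    ENNReal.ofReal (‖h‖ / (2 * T)) * (volume E / 2) ≤ del E h := by
  have hn : 0 < ‖h‖ := norm_pos_iff.mpr h0
  obtain ⟨m, hm1, hm2⟩ := exists_pow_between hT hn hhT
  have hkey : volume E / 2 ≤ 2 ^ m * del E h := by
    refine le_trans (hfar ((2 ^ m : ℝ) • h) ?_) (hpow h m)
    rw [norm_smul, Real.norm_eq_abs, abs_of_pos (by positivity)]
    exact hm1
  -- turn into the stated bound
  have h2m0 : ((2 : ℝ≥0∞) ^ m) ≠ 0 := by positivity
  have h2mt : ((2 : ℝ≥0∞) ^ m) ≠ ∞ := by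
    exact ENNReal.pow_ne_top ENNReal.ofNat_ne_top
  have hle : ENNReal.ofReal (‖h‖ / (2 * T)) ≤ ((2 : ℝ≥0∞) ^ m)⁻¹ := by
    have : ((2 : ℝ≥0∞) ^ m)⁻¹ = ENNReal.ofReal ((2 ^ m : ℝ))⁻¹ := by
      rw [ENNReal.ofReal_inv_of_pos (by positivity)]
      congr 1
      rw [ENNReal.ofReal_pow (by norm_num)]
      norm_num
    rw [this]
    apply ENNReal.ofReal_le_ofReal
    rw [div_le_iff₀ (by positivity), inv_mul_eq_div, le_div_iff₀ (by positivity)]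
    nlinarith
  calc ENNReal.ofReal (‖h‖ / (2 * T)) * (volume E / 2)
      ≤ ((2 : ℝ≥0∞) ^ m)⁻¹ * (2 ^ m * del E h) := mul_le_mul' hle hkey
    _ = del E h := by rw [← mul_assoc, ENNReal.inv_mul_cancel h2m0 h2mt, one_mul]

lemma lintegral_inv_norm_pow_eq_top (d : ℕ) (hd : 1 ≤ d) {T : ℝ} (hT : 0 < T) :
    ∫⁻ h in closedBall (0 : Ed d) T, ENNReal.ofReal (1 / ‖h‖ ^ d) ∂volume = ∞ := by
  haveI : Nonempty (Fin d) := ⟨⟨0, hd⟩⟩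
  set r : ℕ → ℝ := fun k => T / 2 ^ k with hr
  have hrpos : ∀ k, 0 < r k := fun k => by positivity
  have hrmono : ∀ k, r (k + 1) < r k := fun k => by
    rw [hr]
    apply div_lt_div_of_pos_left hT (by positivity)
    exact pow_lt_pow_right₀ one_lt_two (by omega)
  set S : ℕ → Set (Ed d) := fun k => closedBall 0 (r k) \ closedBall 0 (r (k + 1)) with hS
  have hSmeas : ∀ k, MeasurableSet (S k) :=
    fun k => measurableSet_closedBall.diff measurableSet_closedBall
  have hSnorm : ∀ k, ∀ x ∈ S k, r (k+1) < ‖x‖ ∧ ‖x‖ ≤ r k := by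
    rintro k x ⟨h1, h2⟩
    simp only [mem_closedBall, dist_zero_right, not_le] at h1 h2
    exact ⟨h2, h1⟩
  have hdisj : Pairwise (Function.onFun Disjoint S) := by
    intro i j hij
    wlog hlt : i < j generalizing i j
    · exact (this hij.symm (by omega)).symm
    have hmono : r j ≤ r (i + 1) := by
      have : ∀ a b : ℕ, a ≤ b → r b ≤ r a := by
        intro a b hab
        apply div_le_div_of_nonneg_left hT.le (by positivity)
        exact pow_le_pow_right₀ one_le_two hab
      exact this _ _ (by omega)
    rw [Function.onFun, Set.disjoint_left]
    intro x hxi hxj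
    have h1 := hSnorm i x hxi
    have h2 := hSnorm j x hxj
    linarith [h1.1, h2.2]
  have hunion : (⋃ k, S k) ⊆ closedBall (0 : Ed d) T := by
    refine Set.iUnion_subset fun k => ?_
    refine diff_subset.trans (closedBall_subset_closedBall ?_)
    rw [hr]
    calc T / 2 ^ k ≤ T / 1 := by
          apply div_le_div_of_nonneg_left hT.le one_pos
          exact one_le_pow₀ one_le_two
      _ = T := div_one T
  -- volume of unit ball
  set v : ℝ≥0∞ := volume (closedBall (0 : Ed d) 1) with hv
  have hv0 : v ≠ 0 := (measure_closedBall_pos volume _ one_pos).ne'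
  have hvt : v ≠ ∞ := measure_closedBall_lt_top.ne
  have hball : ∀ ρ : ℝ, 0 ≤ ρ → volume (closedBall (0 : Ed d) ρ) = ENNReal.ofReal (ρ ^ d) * v := by
    intro ρ hρ
    rw [hv, Measure.addHaar_closedBall' volume _ hρ, finrank_euclideanSpace_fin]
  -- lower bound for each shell integral
  set c : ℝ≥0∞ := ENNReal.ofReal (1 - (1/2 : ℝ) ^ d) * v with hc
  have hc0 : c ≠ 0 := by
    apply mul_ne_zero _ hv0
    rw [ne_eq, ENNReal.ofReal_eq_zero, not_le, sub_pos]
    calc (1/2 : ℝ) ^ d ≤ (1/2) ^ 1 := by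
          apply pow_le_pow_of_le_one (by norm_num) (by norm_num) hd
      _ < 1 := by norm_num
  have hshell : ∀ k, c ≤ ∫⁻ h in S k, ENNReal.ofReal (1 / ‖h‖ ^ d) ∂volume := by
    intro k
    have hSub : volume (S k) = ENNReal.ofReal (r k ^ d - r (k+1) ^ d) * v := by
      rw [hS]
      rw [measure_diff (closedBall_subset_closedBall (hrmono k).le)
        measurableSet_closedBall.nullMeasurableSet
        (measure_closedBall_lt_top.ne)]
      rw [hball _ (hrpos k).le, hball _ (hrpos (k+1)).le,
        ENNReal.ofReal_sub _ (by positivity), ENNReal.sub_mul (fun _ _ => hvt)]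
    calc c = ENNReal.ofReal (1 / r k ^ d) * volume (S k) := by
          rw [hSub, hc, ← mul_assoc, ← ENNReal.ofReal_mul (by positivity)]
          congr 2
          have h1 : r (k+1) ^ d = r k ^ d * (1/2 : ℝ) ^ d := by
            rw [← mul_pow]
            congr 1
            show T / 2 ^ (k+1) = T / 2 ^ k * (1/2)
            rw [pow_succ]; ring
          rw [h1]
          have h2 : (0:ℝ) < r k ^ d := by positivity
          field_simp
      _ ≤ ∫⁻ h in S k, ENNReal.ofReal (1 / ‖h‖ ^ d) ∂volume := by
          rw [← setLIntegral_const (S k) (ENNReal.ofReal (1 / r k ^ d))]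
          refine setLIntegral_mono
            ((measurable_const.div (measurable_norm.pow_const d)).ennreal_ofReal)
            fun x hx => ?_
          obtain ⟨hx1, hx2⟩ := hSnorm k x hx
          apply ENNReal.ofReal_le_ofReal
          apply one_div_le_one_div_of_le (pow_pos ((hrpos (k+1)).trans hx1) d)
          exact pow_le_pow_left₀ (norm_nonneg x) hx2 d
  rw [eq_top_iff]
  calc (⊤ : ℝ≥0∞) = ∑' _ : ℕ, c := (ENNReal.tsum_const_eq_top_of_ne_zero hc0).symm
    _ ≤ ∑' k, ∫⁻ h in S k, ENNReal.ofReal (1 / ‖h‖ ^ d) ∂volume := ENNReal.tsum_le_tsum hshell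
    _ = ∫⁻ h in ⋃ k, S k, ENNReal.ofReal (1 / ‖h‖ ^ d) ∂volume :=
        (lintegral_iUnion hSmeas hdisj _).symm
    _ ≤ ∫⁻ h in closedBall (0 : Ed d) T, ENNReal.ofReal (1 / ‖h‖ ^ d) ∂volume :=
        lintegral_mono' (Measure.restrict_mono hunion le_rfl) le_rfl

lemma double_eq (E : Set (Ed d)) (hE : MeasurableSet E) :
    (∫⁻ x : Ed d, ∫⁻ y : Ed d, E.indicator (fun _ => (1:ℝ≥0∞)) x *
        Eᶜ.indicator (fun _ => (1:ℝ≥0∞)) y *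
        ENNReal.ofReal (1 / ‖x - y‖ ^ (d + 1)) ∂volume ∂volume) =
    ∫⁻ h : Ed d, ENNReal.ofReal (1 / ‖h‖ ^ (d + 1)) * del E h ∂volume := by
  set K : Ed d → ℝ≥0∞ := fun h => ENNReal.ofReal (1 / ‖h‖ ^ (d + 1)) with hK
  have hKmeas : Measurable K :=
    (measurable_const.div (measurable_norm.pow_const (d+1))).ennreal_ofReal
  set G : Ed d → Ed d → ℝ≥0∞ := fun x h =>
    E.indicator (fun _ => (1:ℝ≥0∞)) x * Eᶜ.indicator (fun _ => (1:ℝ≥0∞)) (x + h) * K h with hG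
  have step1 : ∀ x : Ed d,
      (∫⁻ y : Ed d, E.indicator (fun _ => (1:ℝ≥0∞)) x * Eᶜ.indicator (fun _ => (1:ℝ≥0∞)) y *
        K (x - y) ∂volume) = ∫⁻ h : Ed d, G x h ∂volume := by
    intro x
    rw [← lintegral_add_left_eq_self
      (fun y => E.indicator (fun _ => (1:ℝ≥0∞)) x * Eᶜ.indicator (fun _ => (1:ℝ≥0∞)) y *
        K (x - y)) x]
    apply lintegral_congr
    intro h
    have : x - (x + h) = -h := by abel
    simp only [hG, this, hK, norm_neg]
  rw [lintegral_congr step1]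
  have hGmeas : Measurable (Function.uncurry G) := by
    apply Measurable.mul
    apply Measurable.mul
    · exact ((measurable_one.indicator hE).comp measurable_fst)
    · exact ((measurable_one.indicator hE.compl).comp (measurable_fst.add measurable_snd))
    · exact hKmeas.comp measurable_snd
  rw [lintegral_lintegral_swap hGmeas.aemeasurable]
  apply lintegral_congr
  intro h
  have hset : MeasurableSet (E \ (· + h) ⁻¹' E) :=
    hE.diff (hE.preimage (measurable_add_const h))
  have hpt : ∀ x : Ed d, G x h = (E \ (· + h) ⁻¹' E).indicator (fun _ => K h) x := by
    intro x
    by_cases h1 : x ∈ E <;> by_cases h2 : x + h ∈ E <;>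
      simp [hG, Set.indicator, h1, h2, Set.mem_preimage]
  rw [lintegral_congr hpt, lintegral_indicator hset, setLIntegral_const, del, mul_comm]

lemma kernel_eq_top (hd : 1 ≤ d) (E : Set (Ed d)) (hE : MeasurableSet E)
    (hE0 : volume E ≠ 0) (hEt : volume E ≠ ∞) :
    (∫⁻ x : Ed d, ∫⁻ y : Ed d, E.indicator (fun _ => (1:ℝ≥0∞)) x *
        Eᶜ.indicator (fun _ => (1:ℝ≥0∞)) y *
        ENNReal.ofReal (1 / ‖x - y‖ ^ (d + 1)) ∂volume ∂volume) = ∞ := by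
  rw [double_eq E hE, eq_top_iff]
  obtain ⟨T, hT, hfar⟩ := del_far E hE hE0 hEt
  set C : ℝ≥0∞ := ENNReal.ofReal (1 / (2 * T)) * (volume E / 2) with hC
  have hC0 : C ≠ 0 := by
    apply mul_ne_zero
    · rw [ne_eq, ENNReal.ofReal_eq_zero, not_le]
      positivity
    · exact (ENNReal.div_pos hE0 ENNReal.ofNat_ne_top).ne'
  have hpt : ∀ h : Ed d,
      (closedBall (0 : Ed d) T).indicator
        (fun h => C * ENNReal.ofReal (1 / ‖h‖ ^ d)) h ≤
      ENNReal.ofReal (1 / ‖h‖ ^ (d + 1)) * del E h := by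
    intro h
    by_cases hmem : h ∈ closedBall (0 : Ed d) T
    · rw [Set.indicator_of_mem hmem]
      by_cases h0 : h = 0
      · simp [h0, zero_pow (by omega : d ≠ 0)]
      · have hn : 0 < ‖h‖ := norm_pos_iff.mpr h0
        rw [mem_closedBall, dist_zero_right] at hmem
        have hds := del_small E hT hfar (fun h m => del_pow_le E h m) h0 hmem
        calc C * ENNReal.ofReal (1 / ‖h‖ ^ d)
            = ENNReal.ofReal (1 / ‖h‖ ^ (d+1)) * (ENNReal.ofReal (‖h‖ / (2 * T)) * (volume E / 2)) := by
              rw [hC, ← mul_assoc, mul_right_comm]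
              congr 1
              rw [← ENNReal.ofReal_mul (by positivity), ← ENNReal.ofReal_mul (by positivity)]
              congr 1
              rw [pow_succ]
              field_simp
          _ ≤ ENNReal.ofReal (1 / ‖h‖ ^ (d + 1)) * del E h := mul_le_mul' le_rfl hds
    · rw [Set.indicator_of_notMem hmem]
      exact zero_le
  calc (⊤ : ℝ≥0∞) = C * ∫⁻ h in closedBall (0 : Ed d) T, ENNReal.ofReal (1 / ‖h‖ ^ d) ∂volume := by
        rw [lintegral_inv_norm_pow_eq_top d hd hT, ENNReal.mul_top hC0]
    _ = ∫⁻ h : Ed d, (closedBall (0 : Ed d) T).indicator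
          (fun h => C * ENNReal.ofReal (1 / ‖h‖ ^ d)) h ∂volume := by
        rw [lintegral_indicator measurableSet_closedBall,
          lintegral_const_mul C (f := fun h : Ed d => ENNReal.ofReal (1 / ‖h‖ ^ d)) (by fun_prop)]
    _ ≤ _ := lintegral_mono hpt

end DMAux

open DMAux

/-- An `L²` function with finite Gagliardo `H^{1/2}`-seminorm whose
modulus takes values (a.e.) in a discrete subset of `ℝ` vanishes a.e. -/
theorem discrete_modulus_zero
    (d : ℕ) (hd : 1 ≤ d) (D : Set ℝ) (hD : DiscreteIn D)
    (f : Ed d → ℂ) (hf : MemLp f 2 (volume : Measure (Ed d)))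
    (hsem : (∫⁻ x : Ed d, ∫⁻ y : Ed d,
        ENNReal.ofReal (‖f x - f y‖ ^ 2 / ‖x - y‖ ^ (d + 1)) ∂volume ∂volume) ≠ ⊤)
    (hrange : ∀ᵐ x : Ed d ∂volume, ‖f x‖ ∈ D) :
    f =ᵐ[volume] 0 := by
  by_contra hcon
  have hsm := hf.aestronglyMeasurable
  set g : Ed d → ℂ := hsm.mk f with hgdef
  have hgmeas : StronglyMeasurable g := hsm.stronglyMeasurable_mk
  have hfg : f =ᵐ[volume] g := hsm.ae_eq_mk
  have hg : MemLp g 2 (volume : Measure (Ed d)) := hf.ae_eq hfg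
  have hrange_g : ∀ᵐ x : Ed d ∂volume, ‖g x‖ ∈ D := by
    filter_upwards [hrange, hfg] with x h1 h2
    rwa [← h2]
  have hgne : volume {x : Ed d | g x ≠ 0} ≠ 0 := by
    intro hnull
    apply hcon
    refine hfg.trans ?_
    rw [Filter.EventuallyEq, ae_iff]
    simpa using hnull
  -- find a positive value `a ∈ D` attained on positive measure
  have hcnt : D.Countable := discreteIn_countable hD
  obtain ⟨a, haD, ha0, hEpos⟩ : ∃ a ∈ D, a ≠ 0 ∧ volume {x : Ed d | ‖g x‖ = a} ≠ 0 := by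
    by_contra hno
    push_neg at hno
    have hnull : volume (⋃ a ∈ D \ {0}, {x : Ed d | ‖g x‖ = a}) = 0 := by
      rw [measure_biUnion_null_iff (hcnt.mono diff_subset)]
      rintro a ⟨haD, ha0⟩
      exact hno a haD (by simpa using ha0)
    apply hgne
    have hsub : {x : Ed d | g x ≠ 0} ⊆
        {x : Ed d | ‖g x‖ ∉ D} ∪ ⋃ a ∈ D \ {0}, {x : Ed d | ‖g x‖ = a} := by
      intro x hx
      by_cases hmem : ‖g x‖ ∈ D
      · right
        refine Set.mem_biUnion ⟨hmem, ?_⟩ rfl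
        simp only [Set.mem_singleton_iff]
        exact fun hc => hx (norm_eq_zero.mp hc)
      · left; exact hmem
    have h1 : volume {x : Ed d | ‖g x‖ ∉ D} = 0 := by
      rw [ae_iff] at hrange_g
      exact hrange_g
    refine le_antisymm ?_ zero_le
    calc volume {x : Ed d | g x ≠ 0} ≤ _ := measure_mono hsub
      _ ≤ volume {x : Ed d | ‖g x‖ ∉ D} + volume (⋃ a ∈ D \ {0}, {x : Ed d | ‖g x‖ = a}) :=
          measure_union_le _ _
      _ = 0 := by rw [h1, hnull, add_zero]
  set E : Set (Ed d) := {x : Ed d | ‖g x‖ = a} with hEdef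
  have hEmeas : MeasurableSet E := hgmeas.norm.measurable (measurableSet_singleton a)
  have hapos : 0 < a := by
    obtain ⟨x₀, hx₀⟩ := nonempty_of_measure_ne_zero hEpos
    have h0 : 0 ≤ a := hx₀ ▸ norm_nonneg (g x₀)
    exact h0.lt_of_ne (Ne.symm ha0)
  obtain ⟨ε, hε, hiso⟩ := hD a haD
  have hEt : volume E ≠ ∞ := by
    have hfin := hg.meas_ge_lt_top (p := 2) (by norm_num) (by norm_num)
      (ε := a.toNNReal) (by simp [Real.toNNReal_eq_zero, not_le, hapos])
    refine ne_top_of_le_ne_top hfin.ne (measure_mono ?_)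
    intro x hx
    simp only [Set.mem_setOf_eq] at hx ⊢
    rw [← NNReal.coe_le_coe, Real.coe_toNNReal a hapos.le, coe_nnnorm]
    exact hx.ge
  -- seminorm finiteness transfers to g
  have hsem_g : (∫⁻ x : Ed d, ∫⁻ y : Ed d,
      ENNReal.ofReal (‖g x - g y‖ ^ 2 / ‖x - y‖ ^ (d + 1)) ∂volume ∂volume) ≠ ⊤ := by
    have heq : (∫⁻ x : Ed d, ∫⁻ y : Ed d,
        ENNReal.ofReal (‖g x - g y‖ ^ 2 / ‖x - y‖ ^ (d + 1)) ∂volume ∂volume) =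
        (∫⁻ x : Ed d, ∫⁻ y : Ed d,
        ENNReal.ofReal (‖f x - f y‖ ^ 2 / ‖x - y‖ ^ (d + 1)) ∂volume ∂volume) := by
      apply lintegral_congr_ae
      filter_upwards [hfg] with x hx
      apply lintegral_congr_ae
      filter_upwards [hfg] with y hy
      rw [hx, hy]
    rw [heq]
    exact hsem
  -- key pointwise bound
  have inner_bound : ∀ x : Ed d,
      (∫⁻ y : Ed d, E.indicator (fun _ => (1:ℝ≥0∞)) x * Eᶜ.indicator (fun _ => (1:ℝ≥0∞)) y *
        ENNReal.ofReal (ε ^ 2 / ‖x - y‖ ^ (d + 1)) ∂volume) ≤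
      ∫⁻ y : Ed d, ENNReal.ofReal (‖g x - g y‖ ^ 2 / ‖x - y‖ ^ (d + 1)) ∂volume := by
    intro x
    by_cases hx : x ∈ E
    · apply lintegral_mono_ae
      filter_upwards [hrange_g] with y hy
      by_cases hyE : y ∈ Eᶜ
      · rw [Set.indicator_of_mem hx, Set.indicator_of_mem hyE, one_mul, one_mul]
        apply ENNReal.ofReal_le_ofReal
        have hsq : ε ^ 2 ≤ ‖g x - g y‖ ^ 2 := by
          have hne : ‖g y‖ ≠ a := hyE
          have hfar : ε ≤ |‖g y‖ - a| := by
            by_contra hc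
            push_neg at hc
            exact hne (hiso ‖g y‖ hy hc)
          have hnn : |‖g y‖ - a| ≤ ‖g x - g y‖ := by
            have hxa : ‖g x‖ = a := hx
            calc |‖g y‖ - a| = |‖g y‖ - ‖g x‖| := by rw [hxa]
              _ ≤ ‖g y - g x‖ := abs_norm_sub_norm_le _ _
              _ = ‖g x - g y‖ := norm_sub_rev _ _
          have : ε ≤ ‖g x - g y‖ := hfar.trans hnn
          exact pow_le_pow_left₀ hε.le this 2
        rcases (pow_nonneg (norm_nonneg (x - y)) (d+1)).eq_or_lt with hr | hr
        · rw [← hr, div_zero, div_zero]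
        · exact div_le_div_of_nonneg_right hsq hr.le
      · rw [Set.indicator_of_notMem hyE]
        simp
    · rw [Set.indicator_of_notMem hx]
      simp
  -- factor out the constant ε²
  have hJ1 : (∫⁻ x : Ed d, ∫⁻ y : Ed d, E.indicator (fun _ => (1:ℝ≥0∞)) x *
        Eᶜ.indicator (fun _ => (1:ℝ≥0∞)) y *
        ENNReal.ofReal (ε ^ 2 / ‖x - y‖ ^ (d + 1)) ∂volume ∂volume) =
      ENNReal.ofReal (ε ^ 2) * (∫⁻ x : Ed d, ∫⁻ y : Ed d, E.indicator (fun _ => (1:ℝ≥0∞)) x *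
        Eᶜ.indicator (fun _ => (1:ℝ≥0∞)) y *
        ENNReal.ofReal (1 / ‖x - y‖ ^ (d + 1)) ∂volume ∂volume) := by
    rw [← lintegral_const_mul' _ _ ENNReal.ofReal_ne_top]
    apply lintegral_congr
    intro x
    rw [← lintegral_const_mul' _ _ ENNReal.ofReal_ne_top]
    apply lintegral_congr
    intro y
    rw [div_eq_mul_one_div (ε ^ 2), ENNReal.ofReal_mul (sq_nonneg ε)]
    ring
  -- contradiction
  have hle : ENNReal.ofReal (ε ^ 2) * (∫⁻ x : Ed d, ∫⁻ y : Ed d,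
      E.indicator (fun _ => (1:ℝ≥0∞)) x * Eᶜ.indicator (fun _ => (1:ℝ≥0∞)) y *
      ENNReal.ofReal (1 / ‖x - y‖ ^ (d + 1)) ∂volume ∂volume) ≤
      (∫⁻ x : Ed d, ∫⁻ y : Ed d,
      ENNReal.ofReal (‖g x - g y‖ ^ 2 / ‖x - y‖ ^ (d + 1)) ∂volume ∂volume) := by
    rw [← hJ1]
    exact lintegral_mono inner_bound
  rw [kernel_eq_top hd E hEmeas hEpos hEt,
    ENNReal.mul_top (by simpa [ENNReal.ofReal_eq_zero, not_le] using (pow_pos hε 2).ne')] at hle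
  exact hsem_g (top_le_iff.mp hle)
end
end
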